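/- Let S be a standard Borel space, let 𝓡 : S → P(M±(S)) be a probability kernel into the probability measures on finite signed measures on S, and let M₀ be a measurable subset of M*(S) such that for every μ ∈ M₀ and μ-almost every s ∈ S, 𝓡_s({ν ∈ M±(S) : μ + ν ∈ M₀}) = 1 (these sets are measurable since S is standard Borel). For μ ∈ M₀, define R_μ ∈ P(M₀) as the mixture over s ∼ μ/μ(S) of the pushforwards of 𝓡_s under ν ↦ μ + ν. Then μ ↦ R_μ is a probability kernel from M₀ to itself. -/

import Mathlib

open MeasureTheory

/-- The σ-algebra on the space `M±(S)` of finite signed measures on `S`,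
generated by the evaluation maps `μ ↦ μ B` over measurable sets `B`. -/
instance signedMeasureMeasurableSpace (S : Type*) [MeasurableSpace S] :
    MeasurableSpace (SignedMeasure S) :=
  ⨆ (B : Set S) (_ : MeasurableSet B),
    MeasurableSpace.comap (fun μ : SignedMeasure S => μ B) inferInstance

/-- The (nonnegative) measure associated to a signed measure `μ`: its positive
part. For `0 ≤ μ` this is just `μ` viewed as a measure. -/
noncomputable def posOf {S : Type*} [MeasurableSpace S] (μ : SignedMeasure S) :
    Measure S :=
  μ.toJordanDecomposition.posPart

/-- The normalized measure `μ / μ(S)` associated to a nonnegative signed measure. -/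
noncomputable def drawDist {S : Type*} [MeasurableSpace S] (μ : SignedMeasure S) :
    Measure S :=
  ((posOf μ) Set.univ)⁻¹ • posOf μ

section Aux
variable {S : Type*} [MeasurableSpace S]

lemma measurable_evalSM {B : Set S} (hB : MeasurableSet B) :
    Measurable fun μ : SignedMeasure S => μ B :=
  Measurable.of_comap_le (le_iSup₂_of_le B hB le_rfl)

lemma measurable_of_evalSM {α : Type*} [MeasurableSpace α] {f : α → SignedMeasure S}
    (h : ∀ B, MeasurableSet B → Measurable fun a => f a B) : Measurable f := by
  rw [measurable_iff_comap_le]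
  show MeasurableSpace.comap f (⨆ (B : Set S) (_ : MeasurableSet B),
    MeasurableSpace.comap (fun μ : SignedMeasure S => μ B) inferInstance) ≤ _
  rw [MeasurableSpace.comap_iSup]
  refine iSup_le fun B => ?_
  rw [MeasurableSpace.comap_iSup]
  refine iSup_le fun hB => ?_
  rw [MeasurableSpace.comap_comp]
  exact measurable_iff_comap_le.mp (h B hB)

lemma measurable_addSM :
    Measurable fun p : SignedMeasure S × SignedMeasure S => p.1 + p.2 :=
  measurable_of_evalSM fun B hB => by
    simp only [VectorMeasure.add_apply]
    exact ((measurable_evalSM hB).comp measurable_fst).add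
      ((measurable_evalSM hB).comp measurable_snd)

lemma measurable_const_addSM (μ : SignedMeasure S) :
    Measurable fun ν : SignedMeasure S => μ + ν :=
  measurable_addSM.comp (measurable_const.prodMk measurable_id)

lemma posOf_apply {μ : SignedMeasure S} (hμ : 0 ≤ μ) {B : Set S} (hB : MeasurableSet B) :
    posOf μ B = ENNReal.ofReal (μ B) := by
  obtain ⟨i, hi₁, hi₂, hi₃, hppos, -⟩ := μ.toJordanDecomposition_spec
  rw [posOf, hppos, SignedMeasure.toMeasureOfZeroLE_apply _ hi₂ hi₁ hB]
  have hcompl : μ (iᶜ ∩ B) = 0 := by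
    have hle : μ (iᶜ ∩ B) ≤ 0 := by
      simpa using (VectorMeasure.restrict_le_restrict_iff _ _ hi₁.compl).1 hi₃
        (hi₁.compl.inter hB) Set.inter_subset_left
    have hge : (0 : ℝ) ≤ μ (iᶜ ∩ B) := by
      simpa using hμ (iᶜ ∩ B) (hi₁.compl.inter hB)
    linarith
  have hsplit : μ B = μ (i ∩ B) + μ (iᶜ ∩ B) := by
    rw [← μ.of_union (Disjoint.mono Set.inter_subset_left Set.inter_subset_left
      disjoint_compl_right) (hi₁.inter hB) (hi₁.compl.inter hB)]
    congr 1
    rw [Set.inter_comm i, Set.inter_comm iᶜ, Set.inter_union_compl]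
  have hBeq : μ (i ∩ B) = μ B := by rw [hsplit, hcompl, add_zero]
  have h0 : (0:ℝ) ≤ μ (i ∩ B) := by
    simpa using hμ (i ∩ B) (hi₁.inter hB)
  rw [ENNReal.ofReal_eq_coe_nnreal (hBeq ▸ h0)]
  congr 1
  exact NNReal.eq (by simpa using hBeq)

lemma posOf_univ_ne_zero {μ : SignedMeasure S} (hμ : 0 ≤ μ) (hne : μ ≠ 0) :
    posOf μ Set.univ ≠ 0 := by
  rw [posOf_apply hμ MeasurableSet.univ]
  intro h
  apply hne
  have huniv : μ Set.univ = 0 := by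
    have h1 : μ Set.univ ≤ 0 := by
      by_contra hlt
      push_neg at hlt
      exact (ENNReal.ofReal_pos.mpr hlt).ne' h
    have h2 : (0:ℝ) ≤ μ Set.univ := by simpa using hμ Set.univ MeasurableSet.univ
    linarith
  ext B hB
  have hsplit : μ Set.univ = μ B + μ Bᶜ := by
    rw [← μ.of_union disjoint_compl_right hB hB.compl, Set.union_compl_self]
  have h2 : (0:ℝ) ≤ μ B := by simpa using hμ B hB
  have h3 : (0:ℝ) ≤ μ Bᶜ := by simpa using hμ Bᶜ hB.compl
  simp only [VectorMeasure.zero_apply]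
  linarith [huniv ▸ hsplit]

lemma posOf_univ_ne_top (μ : SignedMeasure S) : posOf μ Set.univ ≠ ⊤ := by
  rw [posOf]; exact measure_ne_top _ _

end Aux

/-- let `S` be a standard Borel space, `𝓡 : S → P(M±(S))` a
probability kernel into the probability measures on the finite signed measures on
`S`, and `M₀` a measurable subset of `M*(S)` (the nonzero nonnegative finite
measures, viewed inside `M±(S)`) such that for every `μ ∈ M₀` and `μ`-almost every
`s`, `𝓡_s {ν : μ + ν ∈ M₀} = 1`. For `μ ∈ M₀`, let `R_μ` be the mixture over
`s ∼ μ/μ(S)` of the pushforwards of `𝓡_s` under `ν ↦ μ + ν`, viewed (via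
restriction to `M₀`) as a measure on `M₀`. Then `μ ↦ R_μ` is a probability kernel
from `M₀` to itself. -/
theorem random_urn_with_removals_isProbabilityKernel (S : Type*) [MeasurableSpace S]
    [StandardBorelSpace S]
    (𝓡 : S → Measure (SignedMeasure S))
    (hmeas : Measurable 𝓡) (hprob : ∀ s, IsProbabilityMeasure (𝓡 s))
    (M₀ : Set (SignedMeasure S)) (hM₀ : MeasurableSet M₀)
    (hsub : ∀ μ ∈ M₀, 0 ≤ μ ∧ μ ≠ 0)
    (hclosed : ∀ μ ∈ M₀, ∀ᵐ s ∂(posOf μ),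
      𝓡 s {ν : SignedMeasure S | μ + ν ∈ M₀} = 1) :
    (∀ μ : M₀, IsProbabilityMeasure
        (Measure.comap (Subtype.val : M₀ → SignedMeasure S)
          (Measure.bind (drawDist μ.1)
            (fun s => Measure.map (fun ν => μ.1 + ν) (𝓡 s))))) ∧
    Measurable (fun μ : M₀ =>
        Measure.comap (Subtype.val : M₀ → SignedMeasure S)
          (Measure.bind (drawDist μ.1)
            (fun s => Measure.map (fun ν => μ.1 + ν) (𝓡 s)))) := by
  set F : M₀ → Measure (SignedMeasure S) := fun μ =>
    Measure.bind (drawDist μ.1) (fun s => Measure.map (fun ν => μ.1 + ν) (𝓡 s)) with hF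
  -- basic facts about drawDist on M₀
  have hdraw_univ : ∀ μ ∈ M₀, drawDist μ Set.univ = 1 := by
    intro μ hμ
    rw [drawDist, Measure.smul_apply, smul_eq_mul]
    exact ENNReal.inv_mul_cancel (posOf_univ_ne_zero (hsub μ hμ).1 (hsub μ hμ).2)
      (posOf_univ_ne_top μ)
  -- the value of F μ on measurable sets
  have hFapply : ∀ (μ : M₀) (B : Set (SignedMeasure S)), MeasurableSet B →
      F μ B = ∫⁻ s, 𝓡 s ((fun ν => μ.1 + ν) ⁻¹' B) ∂(drawDist μ.1) := by
    intro μ B hB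
    have hm : Measurable fun s => Measure.map (fun ν => μ.1 + ν) (𝓡 s) :=
      (Measure.measurable_map _ (measurable_const_addSM μ.1)).comp hmeas
    show (Measure.bind (drawDist μ.1) fun s => Measure.map (fun ν => μ.1 + ν) (𝓡 s)) B = _
    rw [Measure.bind_apply hB hm.aemeasurable]
    refine lintegral_congr fun s => ?_
    rw [Measure.map_apply (measurable_const_addSM μ.1) hB]
  -- the draw kernel
  have hdrawMeas : Measurable fun μ : M₀ => drawDist μ.1 := by
    apply Measure.measurable_of_measurable_coe
    intro B hB
    have heq : ∀ μ : M₀, drawDist μ.1 B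
        = (ENNReal.ofReal (μ.1 Set.univ))⁻¹ * ENNReal.ofReal (μ.1 B) := by
      intro μ
      rw [drawDist, Measure.smul_apply, smul_eq_mul,
        posOf_apply (hsub μ.1 μ.2).1 MeasurableSet.univ, posOf_apply (hsub μ.1 μ.2).1 hB]
    simp only [heq]
    exact ((ENNReal.measurable_ofReal.comp
        ((measurable_evalSM MeasurableSet.univ).comp measurable_subtype_coe)).inv).mul
      (ENNReal.measurable_ofReal.comp ((measurable_evalSM hB).comp measurable_subtype_coe))
  set κ : ProbabilityTheory.Kernel M₀ S := ⟨fun μ => drawDist μ.1, hdrawMeas⟩ with hκ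
  haveI : ProbabilityTheory.IsMarkovKernel κ := ⟨fun μ => ⟨hdraw_univ μ.1 μ.2⟩⟩
  -- the replacement kernel, as a kernel from M₀ × S
  set κ' : ProbabilityTheory.Kernel (M₀ × S) (SignedMeasure S) :=
    ⟨fun p => 𝓡 p.2, hmeas.comp measurable_snd⟩ with hκ'
  haveI : ProbabilityTheory.IsMarkovKernel κ' := ⟨fun p => hprob p.2⟩
  -- joint measurability of the integrand
  have hg : ∀ B : Set (SignedMeasure S), MeasurableSet B →
      Measurable fun p : M₀ × S => 𝓡 p.2 ((fun ν => (p.1 : M₀).1 + ν) ⁻¹' B) := by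
    intro B hB
    have ht : MeasurableSet {q : (M₀ × S) × SignedMeasure S | q.1.1.1 + q.2 ∈ B} := by
      have hm : Measurable fun q : (M₀ × S) × SignedMeasure S => q.1.1.1 + q.2 :=
        measurable_addSM.comp
          ((measurable_subtype_coe.comp (measurable_fst.comp measurable_fst)).prodMk
            measurable_snd)
      exact hm hB
    exact ProbabilityTheory.Kernel.measurable_kernel_prodMk_left (κ := κ') ht
  -- measurability of μ ↦ F μ B
  have hFmeas : ∀ B : Set (SignedMeasure S), MeasurableSet B →
      Measurable fun μ : M₀ => F μ B := by
    intro B hB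
    simp only [fun μ : M₀ => hFapply μ B hB]
    exact Measurable.lintegral_kernel_prod_right' (κ := κ) (hg B hB)
  -- F μ is a probability measure on M₀
  have hFone : ∀ μ : M₀, F μ M₀ = 1 := by
    intro μ
    rw [hFapply μ M₀ hM₀]
    have hae : ∀ᵐ s ∂(drawDist μ.1),
        𝓡 s ((fun ν => μ.1 + ν) ⁻¹' M₀) = 1 := by
      rw [drawDist]
      exact Measure.ae_smul_measure (hclosed μ.1 μ.2) _
    rw [lintegral_congr_ae hae, lintegral_one, hdraw_univ μ.1 μ.2]
  have hemb := MeasurableEmbedding.subtype_coe hM₀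
  constructor
  · intro μ
    constructor
    rw [hemb.comap_apply, Set.image_univ, Subtype.range_coe]
    exact hFone μ
  · apply Measure.measurable_of_measurable_coe
    intro A hA
    obtain ⟨C, hC, rfl⟩ := hA
    simp only [hemb.comap_apply, Subtype.image_preimage_coe]
    exact hFmeas _ (hM₀.inter hC)
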